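/- Let S ⊆ ℝ be measurable and μ ∈ ℝ with α(μ;S) > 0. Then the mean of the truncated Gaussian satisfies |E_{y ~ N(μ,1,S)}[y] − μ| ≤ √(2·log(1/α(μ;S)) + 4). -/

import Mathlib

open MeasureTheory ProbabilityTheory Real
open scoped RealInnerProductSpace ENNReal

lemma gauss_integral_eq (μ : ℝ) (g : ℝ → ℝ) :
    ∫ y, g y ∂(gaussianReal μ 1) = ∫ y, gaussianPDFReal μ 1 y * g y := by
  rw [gaussianReal_of_var_ne_zero μ one_ne_zero]
  have h : gaussianPDF μ 1 = fun x => ((gaussianPDFReal μ 1 x).toNNReal : ℝ≥0∞) := rfl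
  rw [h, integral_withDensity_eq_integral_smul
    (measurable_gaussianPDFReal μ 1).real_toNNReal g]
  congr 1
  ext y
  simp [NNReal.smul_def, Real.coe_toNNReal _ (gaussianPDFReal_nonneg μ 1 y)]

lemma gauss_mgf (μ c : ℝ) :
    ∫ y, Real.exp (c * (y - μ)) ∂(gaussianReal μ 1) = Real.exp (c ^ 2 / 2) := by
  rw [gauss_integral_eq]
  have h : ∀ y : ℝ, gaussianPDFReal μ 1 y * Real.exp (c * (y - μ)) =
      (Real.sqrt (2 * π))⁻¹ * (Real.exp (c ^ 2 / 2) *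
        Real.exp (-(1/2) * (y + -(μ + c)) ^ 2)) := by
    intro y
    rw [gaussianPDFReal_def]
    push_cast
    rw [mul_one, mul_one, mul_assoc, ← Real.exp_add, ← Real.exp_add]
    congr 2
    ring
  simp_rw [h, integral_const_mul]
  rw [integral_add_right_eq_self (fun y => Real.exp (-(1/2) * y ^ 2)) (-(μ + c))]
  have : ∫ y : ℝ, Real.exp (-(1/2) * y ^ 2) = Real.sqrt (π / (1/2)) :=
    integral_gaussian (1/2)
  rw [this]
  have h2 : Real.sqrt (π / (1/2)) = Real.sqrt (2 * π) := by norm_num [mul_comm]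
  rw [h2, ← mul_assoc, mul_comm ((Real.sqrt (2*π))⁻¹), mul_assoc,
    inv_mul_cancel₀ (by positivity : Real.sqrt (2*π) ≠ 0), mul_one]

lemma gauss_integrable_exp (μ c : ℝ) :
    Integrable (fun y => Real.exp (c * (y - μ))) (gaussianReal μ 1) := by
  rw [gaussianReal_of_var_ne_zero μ one_ne_zero]
  have h : gaussianPDF μ 1 = fun x => ((gaussianPDFReal μ 1 x).toNNReal : ℝ≥0∞) := rfl
  rw [h, integrable_withDensity_iff_integrable_smul
    (measurable_gaussianPDFReal μ 1).real_toNNReal]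
  have h2 : ∀ y : ℝ, (gaussianPDFReal μ 1 y).toNNReal • Real.exp (c * (y - μ)) =
      (Real.sqrt (2 * π))⁻¹ * (Real.exp (c ^ 2 / 2) *
        Real.exp (-(1/2) * (y + -(μ + c)) ^ 2)) := by
    intro y
    rw [NNReal.smul_def, Real.coe_toNNReal _ (gaussianPDFReal_nonneg μ 1 y),
      gaussianPDFReal_def, smul_eq_mul]
    push_cast
    rw [mul_one, mul_one, mul_assoc, ← Real.exp_add, ← Real.exp_add]
    congr 2
    ring
  simp_rw [h2]
  apply Integrable.const_mul
  apply Integrable.const_mul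
  exact (integrable_exp_neg_mul_sq (by norm_num : (0:ℝ) < 1/2)).comp_add_right _

lemma gauss_integrable_id (μ : ℝ) :
    Integrable (fun y : ℝ => y) (gaussianReal μ 1) := by
  have h1 : Integrable (fun y : ℝ => y - μ) (gaussianReal μ 1) := by
    apply Integrable.mono'
      ((gauss_integrable_exp μ 1).add (gauss_integrable_exp μ (-1)))
    · exact (measurable_id.sub measurable_const).aestronglyMeasurable
    · refine ae_of_all _ fun y => ?_
      have h2 := Real.add_one_le_exp (y - μ)
      have h3 := Real.add_one_le_exp (-(y - μ))
      simp only [Pi.add_apply, one_mul, neg_one_mul]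
      rw [Real.norm_eq_abs, abs_le]
      constructor <;> nlinarith [Real.exp_pos (y - μ), Real.exp_pos (-(y - μ))]
  have h4 : (fun y : ℝ => y) = (fun y : ℝ => (y - μ) + μ) := by ext y; ring
  rw [h4]
  exact h1.add (integrable_const μ)

/-- The survival probability `α(μ; S) = N(μ,1)(S)`. -/
noncomputable def survival (μ : ℝ) (S : Set ℝ) : ℝ :=
  (gaussianReal μ 1 S).toReal

/-- The truncated Gaussian `N(μ,1,S)`, i.e. `N(μ,1)` conditioned on `S`. -/
noncomputable def truncGaussian (μ : ℝ) (S : Set ℝ) : Measure ℝ :=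
  (gaussianReal μ 1)[|S]

lemma key_bound (μ : ℝ) (S : Set ℝ) (c s : ℝ) (hc : 0 < c) (hs : s ^ 2 = 1) :
    ∫ y in S, s * (y - μ) ∂(gaussianReal μ 1) ≤
      c * survival μ S + c⁻¹ * Real.exp (-(c ^ 2 / 2) - 1) := by
  set γ := gaussianReal μ 1
  have hint_exp : Integrable (fun y => Real.exp (s * c * (y - μ))) γ :=
    gauss_integrable_exp μ (s * c)
  have hint_y : Integrable (fun y : ℝ => s * (y - μ)) γ :=
    (((gauss_integrable_id μ).sub (integrable_const μ)).const_mul s)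
  -- pointwise bound
  have pt : ∀ y : ℝ, s * (y - μ) ≤
      c + c⁻¹ * Real.exp (-(c ^ 2) - 1) * Real.exp (s * c * (y - μ)) := by
    intro y
    have hE := Real.add_one_le_exp (s * c * (y - μ) - c ^ 2 - 1)
    have hEx : Real.exp (s * c * (y - μ) - c ^ 2 - 1) =
        Real.exp (-(c ^ 2) - 1) * Real.exp (s * c * (y - μ)) := by
      rw [← Real.exp_add]; ring_nf
    rw [mul_assoc, ← hEx]
    have h1 : (0:ℝ) < c⁻¹ := inv_pos.mpr hc
    have h3 : c⁻¹ * (s * c * (y - μ) - c ^ 2) = s * (y - μ) - c := by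
      field_simp
    have h4 : s * (y - μ) - c ≤ c⁻¹ * Real.exp (s * c * (y - μ) - c ^ 2 - 1) := by
      rw [← h3]
      exact mul_le_mul_of_nonneg_left (by linarith [hE]) h1.le
    linarith [h4]
  -- integrate
  calc ∫ y in S, s * (y - μ) ∂γ
      ≤ ∫ y in S, (c + c⁻¹ * Real.exp (-(c ^ 2) - 1) * Real.exp (s * c * (y - μ))) ∂γ := by
        apply integral_mono hint_y.restrict
        · exact (integrable_const c).add ((hint_exp.restrict).const_mul _)
        · exact fun y => pt y
    _ = c * (γ S).toReal +
        c⁻¹ * Real.exp (-(c ^ 2) - 1) * ∫ y in S, Real.exp (s * c * (y - μ)) ∂γ := by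
        rw [integral_add (integrable_const c) ((hint_exp.restrict).const_mul _),
          integral_const, integral_const_mul]
        simp [mul_comm, measureReal_restrict_apply_univ, Measure.real]
    _ ≤ c * (γ S).toReal +
        c⁻¹ * Real.exp (-(c ^ 2) - 1) * ∫ y, Real.exp (s * c * (y - μ)) ∂γ := by
        have := setIntegral_le_integral hint_exp
            (ae_of_all _ fun y => (Real.exp_pos _).le) (s := S)
        have hpos : (0:ℝ) ≤ c⁻¹ * Real.exp (-(c ^ 2) - 1) := by positivity
        nlinarith [mul_le_mul_of_nonneg_left this hpos]
    _ = c * survival μ S + c⁻¹ * Real.exp (-(c ^ 2 / 2) - 1) := by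
        rw [gauss_mgf μ (s * c), mul_pow, hs, one_mul, mul_assoc, ← Real.exp_add]
        have h9 : -(c ^ 2) - 1 + c ^ 2 / 2 = -(c ^ 2 / 2) - 1 := by ring
        rw [h9]
        rfl

theorem stmt3 (S : Set ℝ) (hS : MeasurableSet S) (μ : ℝ) (h : 0 < survival μ S) :
    |(∫ y, y ∂(truncGaussian μ S)) - μ| ≤
      Real.sqrt (2 * Real.log (1 / survival μ S) + 4) := by
  set γ := gaussianReal μ 1 with hγ
  set α := survival μ S with hα
  have hγS0 : γ S ≠ 0 := by
    intro h0
    rw [hα, survival, ← hγ, h0] at h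
    simp at h
  have hγStop : γ S ≠ ∞ := measure_ne_top _ _
  have hα1 : α ≤ 1 := by
    have h1 : γ S ≤ 1 := prob_le_one
    have := ENNReal.toReal_mono ENNReal.one_ne_top h1
    simp at this; exact this
  set L := Real.log (1 / α) with hL
  have hL0 : 0 ≤ L := Real.log_nonneg (one_le_one_div h hα1)
  set c := Real.sqrt (2 * L + 2) with hc
  have hc2 : c ^ 2 = 2 * L + 2 := Real.sq_sqrt (by linarith)
  have hcpos : 0 < c := Real.sqrt_pos.mpr (by linarith)
  -- exp identity
  have hLlog : L = -Real.log α := by rw [hL, one_div, Real.log_inv]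
  have hexp : Real.exp (-(c ^ 2 / 2) - 1) = α * Real.exp (-2) := by
    have : -(c ^ 2 / 2) - 1 = Real.log α + (-2) := by
      rw [hc2, hLlog]; ring
    rw [this, Real.exp_add, Real.exp_log h]
  -- set A
  set A := ∫ y in S, (y - μ) ∂γ with hA
  have habs : |A| ≤ c * α + c⁻¹ * (α * Real.exp (-2)) := by
    rw [← hexp]
    apply abs_le.mpr
    constructor
    · have hk := key_bound μ S c (-1) hcpos (by norm_num)
      have : ∫ y in S, (-1 : ℝ) * (y - μ) ∂γ = -A := by
        rw [hA, ← integral_neg]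
        congr 1 with y
        ring
      rw [this] at hk
      linarith
    · have hk := key_bound μ S c 1 hcpos (by norm_num)
      simp_rw [one_mul] at hk
      rw [← hA] at hk
      exact hk
  -- integral representation
  have hIy : Integrable (fun y : ℝ => y) (γ.restrict S) := (gauss_integrable_id μ).restrict
  have hAeq : A = (∫ y in S, y ∂γ) - α * μ := by
    rw [hA, integral_sub hIy (integrable_const μ), integral_const]
    simp only [measureReal_restrict_apply_univ, smul_eq_mul]
    rfl
  have hQ : ∫ y, y ∂(truncGaussian μ S) = α⁻¹ * ∫ y in S, y ∂γ := by
    rw [truncGaussian, ProbabilityTheory.cond, integral_smul_measure, ← hγ,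
      ENNReal.toReal_inv, smul_eq_mul]
    rfl
  have hαinv : α⁻¹ * α = 1 := inv_mul_cancel₀ h.ne'
  have hrep : (∫ y, y ∂(truncGaussian μ S)) - μ = α⁻¹ * A := by
    rw [hQ, hAeq]
    field_simp
  -- combine
  rw [hrep, abs_mul, abs_of_pos (inv_pos.mpr h)]
  have hb1 : α⁻¹ * |A| ≤ α⁻¹ * (c * α + c⁻¹ * (α * Real.exp (-2))) :=
    mul_le_mul_of_nonneg_left habs (inv_nonneg.mpr h.le)
  have hb2 : α⁻¹ * (c * α + c⁻¹ * (α * Real.exp (-2))) = c + Real.exp (-2) * c⁻¹ := by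
    field_simp
  rw [hb2] at hb1
  refine hb1.trans ?_
  -- final arithmetic
  have hgoal : 2 * Real.log (1 / survival μ S) + 4 = c ^ 2 + 2 := by
    rw [hc2, ← hα, ← hL]; ring
  rw [hgoal]
  have he2 : Real.exp (-2) ≤ 1 / 4 := by
    rw [Real.exp_neg]
    have h1 : (2:ℝ) ≤ Real.exp 1 := by
      have := Real.add_one_le_exp 1
      linarith
    have h2 : (4:ℝ) ≤ Real.exp 2 := by
      have : Real.exp 2 = Real.exp 1 * Real.exp 1 := by
        rw [← Real.exp_add]; norm_num
      nlinarith
    calc (Real.exp 2)⁻¹ ≤ (4:ℝ)⁻¹ := by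
          apply inv_anti₀ (by norm_num) h2
      _ = 1 / 4 := by norm_num
  have hinvsq : (c⁻¹) ^ 2 ≤ 1 / 2 := by
    rw [inv_pow]
    calc (c ^ 2)⁻¹ ≤ (2:ℝ)⁻¹ := by
          apply inv_anti₀ (by norm_num) (by linarith)
      _ = 1 / 2 := by norm_num
  have hcc : c * c⁻¹ = 1 := mul_inv_cancel₀ hcpos.ne'
  have hlhs : 0 ≤ c + Real.exp (-2) * c⁻¹ := by positivity
  rw [show c + Real.exp (-2) * c⁻¹ =
    Real.sqrt ((c + Real.exp (-2) * c⁻¹) ^ 2) from (Real.sqrt_sq hlhs).symm]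
  apply Real.sqrt_le_sqrt
  have he0 : 0 ≤ Real.exp (-2) := (Real.exp_pos _).le
  nlinarith [sq_nonneg c⁻¹, sq_nonneg (Real.exp (-2))]
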